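/- arXiv:1011.0950 — 2 statements merged into one kernel-verified Lean document; each statement's English description precedes it below -/
import Mathlib

section
/- [Soundness of the database-level verification algorithm (Theorem 3)] Assume V is nonempty. Let R₁, ..., R_k be relations over finite variable sets X₁, ..., X_k (the relations of the concepts and previously instantiated tuple sets along the protocol path leading to the conflicting query), let v ⊆ X₁ ∪ ⋯ ∪ X_k (the set of previously instantiated variables of the conflicting query together with its RestrictSet), and let 𝒞 be a set of predicates on tuples over v (the relevant branch conditions, which must all hold for the conflicting query to be reached). Define δ = σ_{t ↦ ∀ P ∈ 𝒞, P t}( π_v(R₁ ⋈ ⋯ ⋈ R_k) ). If δ = ∅, then the ontological conflict is spurious: there is no valuation f : ι → V such that f|Xⱼ ∈ Rⱼ for every j and P (f|v) holds for every P ∈ 𝒞, i.e., no correct instantiation of the variables reaches the conflicting query from the start state of the protocol. -/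
/-- A tuple over a finite variable set `X` assigns a value to each variable in `X`. -/
def Tuple (V : Type*) {ι : Type*} (X : Finset ι) : Type _ := ↥X → V

/-- Restriction of a tuple over `X` to a subset `Y ⊆ X`. -/
def Tuple.restrict {ι V : Type*} {X Y : Finset ι} (h : Y ⊆ X) (t : Tuple V X) :
    Tuple V Y :=
  fun y => t ⟨y.1, h y.2⟩

/-- Restriction of a valuation `f : ι → V` to a tuple over `X`. -/
def restrictVal {ι V : Type*} (X : Finset ι) (f : ι → V) : Tuple V X :=
  fun x => f x.1

/-- The cylinder of a relation `R` over `X`: the set of valuations whose restriction to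
`X` lies in `R`. -/
def Cyl {ι V : Type*} {X : Finset ι} (R : Set (Tuple V X)) : Set (ι → V) :=
  {f | restrictVal X f ∈ R}

/-- The natural join of a relation over `X₁` with a relation over `X₂`: the relation
over `X₁ ∪ X₂` consisting of the tuples whose restriction to `X₁` lies in `R₁` and
whose restriction to `X₂` lies in `R₂`. -/
def natJoin {ι V : Type*} [DecidableEq ι] {X₁ X₂ : Finset ι} (R₁ : Set (Tuple V X₁))
    (R₂ : Set (Tuple V X₂)) : Set (Tuple V (X₁ ∪ X₂)) :=
  {t | t.restrict Finset.subset_union_left ∈ R₁ ∧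
       t.restrict Finset.subset_union_right ∈ R₂}

/-- The projection of a relation `R` over `X` to a subset `Y ⊆ X`: the set of
restrictions to `Y` of the tuples of `R`. -/
def proj {ι V : Type*} {X : Finset ι} (Y : Finset ι) (h : Y ⊆ X)
    (R : Set (Tuple V X)) : Set (Tuple V Y) :=
  {u | ∃ t ∈ R, t.restrict h = u}

/-- The selection of a relation `R` over `X` by a predicate `P` on tuples over `X`. -/
def sel {ι V : Type*} {X : Finset ι} (P : Tuple V X → Prop) (R : Set (Tuple V X)) :
    Set (Tuple V X) :=
  {t ∈ R | P t}

/-- A relation together with its variable set. -/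
structure DBRel (ι V : Type*) where
  X : Finset ι
  R : Set (Tuple V X)

/-- Binary natural join of bundled relations. -/
def DBRel.join {ι V : Type*} [DecidableEq ι] (A B : DBRel ι V) : DBRel ι V :=
  ⟨A.X ∪ B.X, natJoin A.R B.R⟩

/-- The iterated (left-nested) binary natural join `((R₁ ⋈ R₂) ⋈ ⋯) ⋈ R_k` of the
relations `R₁ :: [R₂, ..., R_k]`. -/
def multiJoin {ι V : Type*} [DecidableEq ι] (A : DBRel ι V) (l : List (DBRel ι V)) :
    DBRel ι V :=
  l.foldl DBRel.join A

lemma multiJoin_mem {ι V : Type*} [DecidableEq ι] (f : ι → V) :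
    ∀ (l : List (DBRel ι V)) (A : DBRel ι V),
      (∀ B ∈ A :: l, restrictVal B.X f ∈ B.R) →
      restrictVal (multiJoin A l).X f ∈ (multiJoin A l).R := by
  intro l
  induction l with
  | nil => intro A h; exact h A (by simp)
  | cons B l ih =>
    intro A h
    have : restrictVal (A.join B).X f ∈ (A.join B).R := by
      exact ⟨h A (by simp), h B (by simp)⟩
    exact ih (A.join B) (by
      intro C hC
      rcases List.mem_cons.mp hC with rfl | hC
      · exact this
      · exact h C (by simp [hC]))

/-- Soundness of the database-level verification algorithm (Theorem 3): with
`δ = σ_{∀ P ∈ 𝒞, P}( π_v(R₁ ⋈ ⋯ ⋈ R_k) )`, if `δ = ∅` then the ontological conflict is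
spurious: no valuation `f : ι → V` satisfies `f|Xⱼ ∈ Rⱼ` for every `j` together with
every relevant branch condition `P ∈ 𝒞` at `f|v`, i.e. no correct instantiation of the
variables reaches the conflicting query from the start state of the protocol. -/
theorem verifyConflict_sound {ι V : Type*} [DecidableEq ι] [Nonempty V]
    (A : DBRel ι V) (l : List (DBRel ι V)) (v : Finset ι)
    (hv : v ⊆ (multiJoin A l).X) (𝒞 : Set (Tuple V v → Prop))
    (hδ : sel (fun t => ∀ P ∈ 𝒞, P t) (proj v hv (multiJoin A l).R) = ∅) :
    ¬ ∃ f : ι → V, (∀ B ∈ A :: l, restrictVal B.X f ∈ B.R) ∧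
        ∀ P ∈ 𝒞, P (restrictVal v f) := by
  rintro ⟨f, hrels, hconds⟩
  have hmem := multiJoin_mem f l A hrels
  have : restrictVal v f ∈ sel (fun t => ∀ P ∈ 𝒞, P t) (proj v hv (multiJoin A l).R) :=
    ⟨⟨_, hmem, rfl⟩, hconds⟩
  rw [hδ] at this
  exact this
end

section
/- [Decision procedure for spuriousness] Assume V is nonempty. Let R₁, ..., R_k be relations over finite variable sets X₁, ..., X_k, let v ⊆ X₁ ∪ ⋯ ∪ X_k, and let 𝒞 be a set of predicates on tuples over v. Then σ_{t ↦ ∀ P ∈ 𝒞, P t}( π_v(R₁ ⋈ ⋯ ⋈ R_k) ) = ∅ if and only if there is no valuation f : ι → V with f|Xⱼ ∈ Rⱼ for every j and P (f|v) for every P ∈ 𝒞. (Combined soundness and completeness of the relational-algebra test for the spuriousness of an ontological conflict with respect to the current state of the back-end database.) -/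
noncomputable def extendTup {ι V : Type*} [DecidableEq ι] [Nonempty V] {X : Finset ι}
    (t : Tuple V X) : ι → V :=
  fun x => if h : x ∈ X then t ⟨x, h⟩ else Classical.arbitrary V

theorem restrictVal_extendTup {ι V : Type*} [DecidableEq ι] [Nonempty V] {X : Finset ι}
    (t : Tuple V X) : restrictVal X (extendTup t) = t := by
  funext x
  simp [restrictVal, extendTup, x.2]

theorem restrictVal_restrict {ι V : Type*} {X Y : Finset ι} (h : Y ⊆ X) (f : ι → V) :
    (restrictVal X f).restrict h = restrictVal Y f := rfl

theorem mem_multiJoin {ι V : Type*} [DecidableEq ι] (A : DBRel ι V) (l : List (DBRel ι V))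
    (f : ι → V) :
    restrictVal (multiJoin A l).X f ∈ (multiJoin A l).R ↔
      ∀ B ∈ A :: l, restrictVal B.X f ∈ B.R := by
  induction l generalizing A with
  | nil => simp [multiJoin]; exact Iff.rfl
  | cons B l ih =>
    have : multiJoin A (B :: l) = multiJoin (A.join B) l := rfl
    rw [this, ih]
    constructor
    · intro h C hC
      rcases List.mem_cons.1 hC with rfl | hC
      · exact (h _ List.mem_cons_self).1
      rcases List.mem_cons.1 hC with rfl | hC
      · exact (h _ List.mem_cons_self).2
      · exact h _ (List.mem_cons_of_mem _ hC)
    · intro h C hC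
      rcases List.mem_cons.1 hC with rfl | hC
      · exact ⟨h A (by simp), h B (by simp)⟩
      · exact h _ (by simp [hC])

/-- Decision procedure for spuriousness (combined soundness and completeness of the
relational-algebra test): `σ_{∀ P ∈ 𝒞, P}( π_v(R₁ ⋈ ⋯ ⋈ R_k) ) = ∅` iff there is no
valuation `f : ι → V` with `f|Xⱼ ∈ Rⱼ` for every `j` and `P (f|v)` for every
`P ∈ 𝒞`. -/
theorem verifyConflict_iff {ι V : Type*} [DecidableEq ι] [Nonempty V]
    (A : DBRel ι V) (l : List (DBRel ι V)) (v : Finset ι)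
    (hv : v ⊆ (multiJoin A l).X) (𝒞 : Set (Tuple V v → Prop)) :
    sel (fun t => ∀ P ∈ 𝒞, P t) (proj v hv (multiJoin A l).R) = ∅ ↔
      ¬ ∃ f : ι → V, (∀ B ∈ A :: l, restrictVal B.X f ∈ B.R) ∧
          ∀ P ∈ 𝒞, P (restrictVal v f) := by
  rw [Set.eq_empty_iff_forall_notMem]
  constructor
  · intro h ⟨f, hf, hP⟩
    apply h (restrictVal v f)
    refine ⟨⟨restrictVal (multiJoin A l).X f, ?_, restrictVal_restrict hv f⟩, hP⟩
    exact (mem_multiJoin A l f).2 hf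
  · rintro h u ⟨⟨t, ht, rfl⟩, hP⟩
    apply h
    refine ⟨extendTup t, ?_, ?_⟩
    · exact (mem_multiJoin A l _).1 (by rw [restrictVal_extendTup]; exact ht)
    · rw [← restrictVal_restrict hv, restrictVal_extendTup]; exact hP
end
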